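/- Let X be a pure n-dimensional weighted, (n+1)-partite simplicial complex with sides S_0, …, S_n, with all links of dimension > 0 connected. Then each function φ_i defined by φ_i(u) = n for u ∈ S_i and φ_i(u) = -1 otherwise is an eigenfunction of the upper 0-Laplacian Δ_0^+ with eigenvalue (n+1)/n. -/

import Mathlib

open Finset

open scoped Classical

/-- `X` is (the face set of) an abstract simplicial complex: downward closed. -/
def IsSC {V : Type*} [DecidableEq V] (X : Finset (Finset V)) : Prop :=
  ∀ s ∈ X, ∀ t ⊆ s, t ∈ X

/-- `X` is pure `n`-dimensional: every face is contained in a face of cardinality `n+1`. -/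
def IsPure {V : Type*} [DecidableEq V] (X : Finset (Finset V)) (n : ℕ) : Prop :=
  ∀ s ∈ X, ∃ t ∈ X, s ⊆ t ∧ t.card = n + 1

/-- A weight function on a pure `n`-dimensional complex `X`. -/
def IsWeight {V : Type*} [DecidableEq V] (X : Finset (Finset V)) (n : ℕ) (m : Finset V → ℝ) :
    Prop :=
  (∀ s ∈ X, 0 < m s) ∧
  ∀ s ∈ X, s.card ≤ n →
    m s = ∑ t ∈ X.filter (fun t => s ⊆ t ∧ t.card = s.card + 1), m t

/-- An ordered simplex of `X` with `a` vertices (an ordered `(a-1)`-simplex, element of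
`Σ(a-1)`): an injective tuple whose image is a face of `X`. -/
def OSimp {V : Type*} [Fintype V] [DecidableEq V] (X : Finset (Finset V)) {a : ℕ}
    (f : Fin a → V) : Prop :=
  Function.Injective f ∧ Finset.image f Finset.univ ∈ X

/-- A `(a-1)`-form: an antisymmetric real function on ordered tuples. -/
def IsForm {V : Type*} {a : ℕ} (φ : (Fin a → V) → ℝ) : Prop :=
  ∀ (f : Fin a → V) (π : Equiv.Perm (Fin a)),
    φ (f ∘ π) = ((Equiv.Perm.sign π : ℤ) : ℝ) * φ f

/-- The weighted inner product `⟨φ,ψ⟩ = Σ_{f ∈ Σ(a-1)} (m(f)/a!) φ(f) ψ(f)` on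
`(a-1)`-forms. -/
noncomputable def formIP {V : Type*} [Fintype V] [DecidableEq V] (X : Finset (Finset V))
    (m : Finset V → ℝ) {a : ℕ} (φ ψ : (Fin a → V) → ℝ) : ℝ :=
  ∑ f : Fin a → V,
    if OSimp X f then (m (Finset.image f Finset.univ) / (Nat.factorial a : ℝ)) * (φ f * ψ f)
    else 0

/-- The simplicial differential `d : C^{a-1} → C^a`. -/
def dOp {V : Type*} {a : ℕ} (φ : (Fin a → V) → ℝ) : (Fin (a + 1) → V) → ℝ :=
  fun f => ∑ i : Fin (a + 1), (-1 : ℝ) ^ (i : ℕ) * φ (fun j => f (i.succAbove j))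

/-- The codifferential `δ : C^a → C^{a-1}`, given by
`(δφ)(τ) = Σ_{v : vτ ∈ Σ(a)} (m(vτ)/m(τ)) φ(vτ)`. -/
noncomputable def deltaOp {V : Type*} [Fintype V] [DecidableEq V] (X : Finset (Finset V))
    (m : Finset V → ℝ) {a : ℕ} (φ : (Fin (a + 1) → V) → ℝ) : (Fin a → V) → ℝ :=
  fun τ => ∑ v : V,
    if OSimp X (Fin.cons v τ : Fin (a + 1) → V) then
      (m (Finset.image (Fin.cons v τ : Fin (a + 1) → V) Finset.univ) /
        m (Finset.image τ Finset.univ)) * φ (Fin.cons v τ)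
    else 0

/-- The vertices of the link of the face `τ`. -/
def linkVerts {V : Type*} [Fintype V] [DecidableEq V] (X : Finset (Finset V)) (τ : Finset V) :
    Finset V :=
  Finset.univ.filter (fun v => v ∉ τ ∧ insert v τ ∈ X)

/-- The upper `0`-Laplacian `Δ⁺_{τ,0}` of the link of the face `τ`, with the induced weight
`m_τ(σ) = m(τ ∪ σ)`:  `Δ⁺φ(u) = φ(u) - Σ_{v : {u,v} ∈ X_τ} (m_τ({u,v})/m_τ({u})) φ(v)`. -/
noncomputable def linkLap {V : Type*} [Fintype V] [DecidableEq V] (X : Finset (Finset V))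
    (m : Finset V → ℝ) (τ : Finset V) (φ : V → ℝ) : V → ℝ :=
  fun u => φ u -
    ∑ v ∈ Finset.univ.filter (fun v => v ∉ insert u τ ∧ insert v (insert u τ) ∈ X),
      (m (insert v (insert u τ)) / m (insert u τ)) * φ v

/-- `μ` is an eigenvalue of the upper `0`-Laplacian of the link of `τ`. -/
def linkEig {V : Type*} [Fintype V] [DecidableEq V] (X : Finset (Finset V)) (m : Finset V → ℝ)
    (τ : Finset V) (μ : ℝ) : Prop :=
  ∃ φ : V → ℝ, (∀ v, v ∉ linkVerts X τ → φ v = 0) ∧ (∃ u ∈ linkVerts X τ, φ u ≠ 0) ∧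
    ∀ u ∈ linkVerts X τ, linkLap X m τ φ u = μ * φ u

/-- The link of the face `τ` is a connected: any two of its vertices are joined by a path of
edges of the link. -/
def linkConn {V : Type*} [Fintype V] [DecidableEq V] (X : Finset (Finset V)) (τ : Finset V) :
    Prop :=
  ∀ u ∈ linkVerts X τ, ∀ v ∈ linkVerts X τ,
    Relation.ReflTransGen
      (fun a b => a ∈ linkVerts X τ ∧ b ∈ linkVerts X τ ∧ a ≠ b ∧ insert a (insert b τ) ∈ X)
      u v

theorem sideUniq' {V : Type*} [DecidableEq V] {n : ℕ} {S : Fin (n + 1) → Finset V}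
    (hdisj : ∀ i j, i ≠ j → Disjoint (S i) (S j)) {v : V} {i j : Fin (n + 1)}
    (hi : v ∈ S i) (hj : v ∈ S j) : i = j := by
  by_contra h
  exact (Finset.disjoint_left.mp (hdisj i j h)) hi hj

theorem chainExpand' {V : Type*} [DecidableEq V] (n : ℕ)
    (X : Finset (Finset V)) (hSC : IsSC X)
    (m : Finset V → ℝ) (hm : IsWeight X n m) :
    ∀ k : ℕ, ∀ s ∈ X, s.card + k ≤ n + 1 →
      m s = (Nat.factorial k : ℝ) *
        ∑ t ∈ X.filter (fun t => s ⊆ t ∧ t.card = s.card + k), m t := by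
  intro k
  induction k with
  | zero =>
    intro s hs _
    have hfe : X.filter (fun t => s ⊆ t ∧ t.card = s.card + 0) = {s} := by
      ext t
      simp only [mem_filter, mem_singleton]
      constructor
      · rintro ⟨_, hst, hc⟩
        exact (Finset.eq_of_subset_of_card_le hst (by omega)).symm
      · rintro rfl; exact ⟨hs, subset_rfl, rfl⟩
    rw [hfe]; simp
  | succ k ih =>
    intro s hs hcard
    rw [hm.2 s hs (by omega)]
    have step : ∀ t1 ∈ X.filter (fun t => s ⊆ t ∧ t.card = s.card + 1),
        m t1 = (Nat.factorial k : ℝ) *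
          ∑ t ∈ X.filter (fun t => t1 ⊆ t ∧ t.card = s.card + 1 + k), m t := by
      intro t1 ht1
      simp only [mem_filter] at ht1
      have h := ih t1 ht1.1 (by omega)
      rw [ht1.2.2] at h
      exact h
    rw [Finset.sum_congr rfl step, ← Finset.mul_sum]
    have swap : ∑ t1 ∈ X.filter (fun t => s ⊆ t ∧ t.card = s.card + 1),
        ∑ t ∈ X.filter (fun t => t1 ⊆ t ∧ t.card = s.card + 1 + k), m t
        = ((k + 1 : ℕ) : ℝ) *
          ∑ t ∈ X.filter (fun t => s ⊆ t ∧ t.card = s.card + (k + 1)), m t := by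
      have e1 : ∀ t1, ∑ t ∈ X.filter (fun t => t1 ⊆ t ∧ t.card = s.card + 1 + k), m t
          = ∑ t ∈ X, if t1 ⊆ t ∧ t.card = s.card + 1 + k then m t else 0 := by
        intro t1; rw [Finset.sum_filter]
      simp only [e1]
      rw [Finset.sum_comm]
      have e2 : ∀ t ∈ X,
          (∑ t1 ∈ X.filter (fun t1 => s ⊆ t1 ∧ t1.card = s.card + 1),
            if t1 ⊆ t ∧ t.card = s.card + 1 + k then m t else 0)
          = if s ⊆ t ∧ t.card = s.card + (k + 1) then ((k + 1 : ℕ) : ℝ) * m t else 0 := by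
        intro t ht
        by_cases h : s ⊆ t ∧ t.card = s.card + (k + 1)
        · rw [if_pos h]
          have hsub : (X.filter (fun t1 => s ⊆ t1 ∧ t1.card = s.card + 1)).filter
              (fun t1 => t1 ⊆ t) = (t \ s).image (fun a => insert a s) := by
            ext t1
            simp only [mem_filter, mem_image, mem_sdiff]
            constructor
            · rintro ⟨⟨ht1X, hst1, hc1⟩, ht1t⟩
              have hcd : (t1 \ s).card = 1 := by
                rw [Finset.card_sdiff_of_subset hst1]; omega
              obtain ⟨a, ha⟩ := Finset.card_eq_one.mp hcd
              have hat1 : a ∈ t1 \ s := by rw [ha]; exact Finset.mem_singleton_self a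
              rw [Finset.mem_sdiff] at hat1
              refine ⟨a, ⟨ht1t hat1.1, hat1.2⟩, ?_⟩
              have : insert a s = t1 \ s ∪ s := by rw [ha]; exact Finset.insert_eq a s
              rw [this, Finset.sdiff_union_of_subset hst1]
            · rintro ⟨a, ⟨hat, has⟩, rfl⟩
              have hsub2 : insert a s ⊆ t := Finset.insert_subset hat h.1
              refine ⟨⟨hSC t ht _ hsub2, Finset.subset_insert a s, ?_⟩, hsub2⟩
              rw [Finset.card_insert_of_notMem has]
          have hsum : ∑ t1 ∈ X.filter (fun t1 => s ⊆ t1 ∧ t1.card = s.card + 1),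
              (if t1 ⊆ t ∧ t.card = s.card + 1 + k then m t else 0)
              = ∑ t1 ∈ (X.filter (fun t1 => s ⊆ t1 ∧ t1.card = s.card + 1)).filter
                  (fun t1 => t1 ⊆ t), m t := by
            have htc : t.card = s.card + 1 + k := by omega
            simp only [htc, eq_self_iff_true, and_true]
            rw [← Finset.sum_filter]
          rw [hsum, hsub, Finset.sum_const]
          have hinj : Set.InjOn (fun a => insert a s) ((t \ s : Finset V) : Set V) := by
            intro a ha b hb hab
            simp only [Finset.mem_coe, Finset.mem_sdiff] at ha hb
            simp only at hab
            have : a ∈ insert b s := hab ▸ Finset.mem_insert_self a s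
            rcases Finset.mem_insert.mp this with h' | h'
            · exact h'
            · exact absurd h' ha.2
          rw [Finset.card_image_of_injOn hinj, Finset.card_sdiff_of_subset h.1]
          have : t.card - s.card = k + 1 := by omega
          rw [this]
          simp [nsmul_eq_mul]
        · rw [if_neg h]
          apply Finset.sum_eq_zero
          intro t1 ht1
          simp only [mem_filter] at ht1
          rw [if_neg]
          rintro ⟨hsub, hc⟩
          exact h ⟨ht1.2.1.trans hsub, by omega⟩
      rw [Finset.sum_congr rfl e2, Finset.sum_filter, Finset.mul_sum]
      apply Finset.sum_congr rfl
      intro t _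
      by_cases h : s ⊆ t ∧ t.card = s.card + (k + 1)
      · rw [if_pos h, if_pos h]
      · rw [if_neg h, if_neg h, mul_zero]
    rw [swap]
    push_cast [Nat.factorial_succ]
    ring

theorem topTrans' {V : Type*} [Fintype V] [DecidableEq V] {n : ℕ} {X : Finset (Finset V)}
    (hSC : IsSC X) {S : Fin (n + 1) → Finset V}
    (hdisj : ∀ i j, i ≠ j → Disjoint (S i) (S j))
    (hcover : ∀ v : V, {v} ∈ X → ∃ i, v ∈ S i)
    (hpartite : ∀ u v : V, u ≠ v → {u, v} ∈ X → ∃ i j, i ≠ j ∧ u ∈ S i ∧ v ∈ S j)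
    {T : Finset V} (hT : T ∈ X) (hTc : T.card = n + 1) (i : Fin (n + 1)) :
    ∃! v, v ∈ T ∧ v ∈ S i := by
  classical
  have hvS : ∀ v ∈ T, ∃ j, v ∈ S j := by
    intro v hv
    exact hcover v (hSC T hT {v} (Finset.singleton_subset_iff.mpr hv))
  set σ : V → Fin (n + 1) := fun v => if h : ∃ j, v ∈ S j then h.choose else i with hσdef
  have hσ : ∀ v, (∃ j, v ∈ S j) → v ∈ S (σ v) := by
    intro v h
    simp only [hσdef, dif_pos h]
    exact h.choose_spec
  have hσeq : ∀ v j, v ∈ S j → σ v = j := by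
    intro v j hj
    exact sideUniq' hdisj (hσ v ⟨j, hj⟩) hj
  have hinj : Set.InjOn σ (T : Set V) := by
    intro v hv w hw hvw
    by_contra hne
    have hvwX : {v, w} ∈ X := by
      apply hSC T hT
      intro x hx
      rcases Finset.mem_insert.mp hx with rfl | hx
      · exact hv
      · rw [Finset.mem_singleton] at hx; subst hx; exact hw
    obtain ⟨a, b, hab, ha, hb⟩ := hpartite v w hne hvwX
    rw [hσeq v a ha, hσeq w b hb] at hvw
    exact hab hvw
  have himg : T.image σ = Finset.univ := by
    apply Finset.eq_univ_of_card
    rw [Finset.card_image_of_injOn hinj, hTc, Fintype.card_fin]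
  have hex : ∃ v ∈ T, σ v = i := by
    have : i ∈ T.image σ := by rw [himg]; exact Finset.mem_univ i
    simpa using this
  obtain ⟨v, hvT, hvi⟩ := hex
  refine ⟨v, ⟨hvT, ?_⟩, ?_⟩
  · have := hσ v (hvS v hvT)
    rwa [hvi] at this
  · rintro w ⟨hwT, hwi⟩
    exact hinj hwT hvT (by rw [hσeq w i hwi, hvi])

/-- Let `X` be a pure `n`-dimensional weighted `(n+1)`-partite simplicial
complex with sides `S_0,…,S_n`, with all links of dimension `> 0` connected.  Then each
function `φ_i` (equal to `n` on `S_i` and `-1` elsewhere) is an eigenfunction of the upper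
`0`-Laplacian `Δ₀⁺` (the `0`-Laplacian of the link of `∅`) with eigenvalue `(n+1)/n`. -/
theorem stmt17 {V : Type*} [Fintype V] [DecidableEq V] (n : ℕ) (hn : 1 ≤ n)
    (X : Finset (Finset V)) (hSC : IsSC X) (hpure : IsPure X n)
    (hconn : ∀ s ∈ X, s.card + 1 ≤ n → linkConn X s)
    (m : Finset V → ℝ) (hm : IsWeight X n m)
    (S : Fin (n + 1) → Finset V)
    (hdisj : ∀ i j, i ≠ j → Disjoint (S i) (S j))
    (hcover : ∀ v : V, {v} ∈ X → ∃ i, v ∈ S i)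
    (hpartite : ∀ u v : V, u ≠ v → {u, v} ∈ X →
      ∃ i j, i ≠ j ∧ u ∈ S i ∧ v ∈ S j) :
    ∀ i : Fin (n + 1), ∀ u : V, {u} ∈ X →
      linkLap X m ∅ (fun x => if x ∈ S i then (n : ℝ) else -1) u =
        ((n : ℝ) + 1) / n * (if u ∈ S i then (n : ℝ) else -1) := by
  classical
  intro i u hu
  have hn0 : (n : ℝ) ≠ 0 := Nat.cast_ne_zero.mpr (by omega)
  have hmu : (0 : ℝ) < m {u} := hm.1 {u} hu
  simp only [linkLap, insert_empty_eq]
  set N : Finset V := Finset.univ.filter (fun v => v ∉ ({u} : Finset V) ∧ insert v {u} ∈ X)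
    with hN
  have hNmem : ∀ v, v ∈ N ↔ v ≠ u ∧ insert v {u} ∈ X := by
    intro v
    simp [hN]
  -- Lemma A : total edge weight at u equals m {u}
  have hA : ∑ v ∈ N, m (insert v {u}) = m {u} := by
    have h2 := hm.2 {u} hu (by simpa using hn)
    have himg : X.filter (fun t => {u} ⊆ t ∧ t.card = ({u} : Finset V).card + 1)
        = N.image (fun v => insert v {u}) := by
      ext t
      simp only [mem_filter, mem_image, Finset.card_singleton, Finset.singleton_subset_iff]
      constructor
      · rintro ⟨htX, hut, hc⟩
        obtain ⟨a, b, hab, rfl⟩ := Finset.card_eq_two.mp hc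
        rcases Finset.mem_insert.mp hut with rfl | hb
        · refine ⟨b, (hNmem b).mpr ⟨hab.symm, ?_⟩, ?_⟩
          · rwa [show insert b {u} = ({u, b} : Finset V) from Finset.pair_comm b u]
          · exact (Finset.pair_comm b u).symm ▸ rfl
        · rw [Finset.mem_singleton] at hb
          subst hb
          refine ⟨a, (hNmem a).mpr ⟨hab, ?_⟩, rfl⟩
          rwa [show insert a {u} = ({a, u} : Finset V) from rfl]
      · rintro ⟨v, hv, rfl⟩
        obtain ⟨hvu, hvX⟩ := (hNmem v).mp hv
        refine ⟨hvX, Finset.mem_insert_of_mem (Finset.mem_singleton_self u), ?_⟩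
        rw [Finset.card_insert_of_notMem (by simpa using hvu)]
        simp
    have hinj : ∀ x ∈ N, ∀ y ∈ N,
        insert x ({u} : Finset V) = insert y ({u} : Finset V) → x = y := by
      intro x hx y hy hxy
      have hxu := ((hNmem x).mp hx).1
      have : x ∈ insert y ({u} : Finset V) :=
        hxy ▸ (Finset.mem_insert_self x ({u} : Finset V))
      rcases Finset.mem_insert.mp this with h | h
      · exact h
      · exact absurd (Finset.mem_singleton.mp h) hxu
    rw [h2, himg, Finset.sum_image hinj]
  -- main case split
  by_cases hui : u ∈ S i
  · -- u is on side i : no neighbour is on side i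
    have hnot : ∀ v ∈ N, v ∉ S i := by
      intro v hv hvS
      obtain ⟨hvu, hvX⟩ := (hNmem v).mp hv
      have huvX : {u, v} ∈ X := by
        rwa [show ({u, v} : Finset V) = insert v {u} from Finset.pair_comm u v]
      obtain ⟨a, b, hab, ha, hb⟩ := hpartite u v (fun h => hvu h.symm) huvX
      exact hab ((sideUniq' hdisj ha hui).trans (sideUniq' hdisj hvS hb))
    have hsum : ∑ v ∈ N, m (insert v {u}) / m {u} * (if v ∈ S i then (n : ℝ) else -1)
        = -1 := by
      have : ∀ v ∈ N, m (insert v {u}) / m {u} * (if v ∈ S i then (n : ℝ) else -1)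
          = m (insert v {u}) / m {u} * (-1) := by
        intro v hv
        rw [if_neg (hnot v hv)]
      rw [Finset.sum_congr rfl this, ← Finset.sum_mul, ← Finset.sum_div, hA,
        div_self (ne_of_gt hmu)]
      ring
    rw [hsum]
    simp only [hui, if_true]
    field_simp
    ring
  · -- u is not on side i
    set A : Finset V := N.filter (fun v => v ∈ S i) with hAdef
    have hB : (n : ℝ) * ∑ v ∈ A, m (insert v {u}) = m {u} := by
      have hC := chainExpand' n X hSC m hm n {u} hu (by simp only [Finset.card_singleton]; omega)
      rw [Finset.card_singleton] at hC
      have hstep : ∀ v ∈ A, m (insert v {u})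
          = ((n - 1).factorial : ℝ) *
            ∑ T ∈ X.filter (fun T => {u} ⊆ T ∧ T.card = 1 + n),
              (if v ∈ T then m T else 0) := by
        intro v hv
        rw [hAdef, Finset.mem_filter] at hv
        obtain ⟨hvu, hvX⟩ := (hNmem v).mp hv.1
        have hc2 : (insert v ({u} : Finset V)).card = 2 := by
          rw [Finset.card_insert_of_notMem (by simpa using hvu), Finset.card_singleton]
        have hce := chainExpand' n X hSC m hm (n - 1) (insert v {u}) hvX (by omega)
        rw [hc2] at hce
        rw [hce]
        congr 1
        rw [Finset.sum_filter, Finset.sum_filter]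
        apply Finset.sum_congr rfl
        intro T _
        by_cases h1 : {u} ⊆ T ∧ T.card = 1 + n
        · rw [if_pos h1]
          by_cases h2 : v ∈ T
          · rw [if_pos h2, if_pos ⟨Finset.insert_subset h2 h1.1, by omega⟩]
          · rw [if_neg h2, if_neg (fun hc => h2 (hc.1 (Finset.mem_insert_self v {u})))]
        · rw [if_neg h1, if_neg]
          rintro ⟨hsub, hcT⟩
          exact h1 ⟨(Finset.subset_insert v {u}).trans hsub, by omega⟩
      rw [Finset.sum_congr rfl hstep, ← Finset.mul_sum]
      rw [Finset.sum_comm]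
      have hcount : ∀ T ∈ X.filter (fun T => {u} ⊆ T ∧ T.card = 1 + n),
          ∑ v ∈ A, (if v ∈ T then m T else 0) = m T := by
        intro T hT
        simp only [mem_filter, Finset.singleton_subset_iff] at hT
        obtain ⟨hTX, huT, hTc⟩ := hT
        obtain ⟨v0, ⟨hv0T, hv0S⟩, huniq⟩ :=
          topTrans' hSC hdisj hcover hpartite hTX (by omega : T.card = n + 1) i
        have hv0u : v0 ≠ u := fun h => hui (h ▸ hv0S)
        have hv0N : v0 ∈ N := (hNmem v0).mpr ⟨hv0u,
          hSC T hTX _ (Finset.insert_subset hv0T (Finset.singleton_subset_iff.mpr huT))⟩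
        have hsingle : A.filter (fun v => v ∈ T) = {v0} := by
          apply Finset.eq_singleton_iff_unique_mem.mpr
          constructor
          · simp only [hAdef, Finset.mem_filter]
            exact ⟨⟨hv0N, hv0S⟩, hv0T⟩
          · intro w hw
            simp only [hAdef, Finset.mem_filter] at hw
            exact huniq w ⟨hw.2, hw.1.2⟩
        rw [← Finset.sum_filter, hsingle, Finset.sum_singleton]
      rw [Finset.sum_congr rfl hcount, ← mul_assoc, hC]
      congr 1
      rw [← Nat.cast_mul, Nat.mul_factorial_pred (by omega : n ≠ 0)]
    have hsA : ∑ v ∈ A, m (insert v {u}) = m {u} / n := by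
      rw [eq_div_iff hn0]
      linarith [hB]
    have hsplitm := Finset.sum_filter_add_sum_filter_not N (fun v => v ∈ S i)
      (fun v => m (insert v {u}))
    have hsB : ∑ v ∈ N.filter (fun v => ¬v ∈ S i), m (insert v {u})
        = m {u} - m {u} / n := by
      have h := hsplitm
      rw [hA, ← hAdef, hsA] at h
      linarith [h]
    have hsum : ∑ v ∈ N, m (insert v {u}) / m {u} * (if v ∈ S i then (n : ℝ) else -1)
        = 1 / n := by
      rw [← Finset.sum_filter_add_sum_filter_not N (fun v => v ∈ S i)]
      have e1 : ∑ v ∈ N.filter (fun v => v ∈ S i),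
          m (insert v {u}) / m {u} * (if v ∈ S i then (n : ℝ) else -1)
          = (∑ v ∈ A, m (insert v {u})) / m {u} * n := by
        rw [Finset.sum_div, Finset.sum_mul, hAdef]
        apply Finset.sum_congr rfl
        intro v hv
        rw [if_pos (Finset.mem_filter.mp hv).2]
      have e2 : ∑ v ∈ N.filter (fun v => ¬v ∈ S i),
          m (insert v {u}) / m {u} * (if v ∈ S i then (n : ℝ) else -1)
          = (∑ v ∈ N.filter (fun v => ¬v ∈ S i), m (insert v {u})) / m {u} * (-1) := by
        rw [Finset.sum_div, Finset.sum_mul]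
        apply Finset.sum_congr rfl
        intro v hv
        rw [if_neg (Finset.mem_filter.mp hv).2]
      rw [e1, e2, hsA, hsB]
      field_simp
      ring
    rw [hsum]
    simp only [hui, if_false]
    field_simp
    ring
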